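/- Let I ⊂ ℚ[S,T] be the ideal generated by (T−1)(T²−1), (S−1)(S²−1), and (S−T)(T−1), let R₂ = ℚ[S,T]/I, and for ℓ ≥ 1 let ψ^ℓ be the unique ℚ-algebra endomorphism of R₂ with ψ^ℓ(S) = S^ℓ and ψ^ℓ(T) = T^ℓ. Let J ⊆ R₂ be the ℚ-linear span of Δ₀ := 1 − S² and Δ₁ := 2T² − 1 − S². Then the set of units L ∈ R₂ satisfying ψ^ℓ(L) = L^ℓ for all ℓ ≥ 1 is exactly the union of the four pairwise disjoint cosets 1 + J, S + J, T + J, and (1 + S − T) + J. -/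

import Mathlib

/-!
STATEMENT 16: Let `R₂ = ℚ[S,T]/⟨(T-1)(T²-1), (S-1)(S²-1), (S-T)(T-1)⟩`, with
the Adams operations `ψ^ℓ` (`ℓ ≥ 1`) determined by `ψ^ℓ(S) = S^ℓ`,
`ψ^ℓ(T) = T^ℓ`, and let `J` be the ℚ-span of `Δ₀ = 1 - S²` and
`Δ₁ = 2T² - 1 - S²`.  Then the set of units `L` with `ψ^ℓ(L) = L^ℓ` for all
`ℓ ≥ 1` is exactly the union of the four pairwise disjoint cosets `1 + J`,
`S + J`, `T + J` and `(1 + S - T) + J`.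
-/

open MvPolynomial

/-- The defining ideal of the virtual K-theory of `ℙ(1,2)`:
`⟨(T-1)(T²-1), (S-1)(S²-1), (S-T)(T-1)⟩ ⊆ ℚ[S,T]`, with `S = X 0`, `T = X 1`. -/
noncomputable def virtIdeal2 : Ideal (MvPolynomial (Fin 2) ℚ) :=
  Ideal.span
    {(X 1 - 1) * ((X 1) ^ 2 - 1),
     (X 0 - 1) * ((X 0) ^ 2 - 1),
     (X 0 - X 1) * (X 1 - 1)}

/-- `R₂ = ℚ[S,T]/⟨(T-1)(T²-1), (S-1)(S²-1), (S-T)(T-1)⟩`. -/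
abbrev VirtK2 : Type := MvPolynomial (Fin 2) ℚ ⧸ virtIdeal2

/-- The image of `S` in `R₂`. -/
noncomputable def sElt : VirtK2 := Ideal.Quotient.mk virtIdeal2 (X 0)

/-- The image of `T` in `R₂`. -/
noncomputable def tElt : VirtK2 := Ideal.Quotient.mk virtIdeal2 (X 1)

/-- The translation group `J`: the ℚ-span of `Δ₀ = 1 - S²` and
`Δ₁ = 2T² - 1 - S²` in `R₂`. -/
noncomputable def transJ2 : Submodule ℚ VirtK2 :=
  Submodule.span ℚ {1 - sElt ^ 2, 2 * tElt ^ 2 - 1 - sElt ^ 2}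

open TrivSqZeroExt DualNumber
set_option synthInstance.maxHeartbeats 1000000
set_option maxHeartbeats 1000000
set_option linter.unusedVariables false

noncomputable abbrev vmk : MvPolynomial (Fin 2) ℚ →+* VirtK2 := Ideal.Quotient.mk virtIdeal2

lemma vmk_eq {p q : MvPolynomial (Fin 2) ℚ} (a b c : MvPolynomial (Fin 2) ℚ)
    (h : p - q = a * ((X 1 - 1) * ((X 1 : MvPolynomial (Fin 2) ℚ) ^ 2 - 1))
      + b * ((X 0 - 1) * ((X 0 : MvPolynomial (Fin 2) ℚ) ^ 2 - 1))
      + c * ((X 0 - X 1) * (X 1 - 1))) :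
    vmk p = vmk q := by
  rw [Ideal.Quotient.eq, h, virtIdeal2]
  exact add_mem (add_mem
    (Ideal.mul_mem_left _ _ (Ideal.subset_span (Set.mem_insert _ _)))
    (Ideal.mul_mem_left _ _ (Ideal.subset_span (Set.mem_insert_of_mem _ (Set.mem_insert _ _)))))
    (Ideal.mul_mem_left _ _ (Ideal.subset_span (Set.mem_insert_of_mem _
      (Set.mem_insert_of_mem _ rfl))))

-- basic quotient identities
lemma hs3 : sElt ^ 3 = sElt ^ 2 + sElt - 1 := by
  have := vmk_eq (p := (X 0 : MvPolynomial (Fin 2) ℚ) ^ 3) (q := X 0 ^ 2 + X 0 - 1) 0 1 0 (by ring)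
  simpa [sElt, map_pow, map_add, map_sub, map_one] using this

lemma ht3 : tElt ^ 3 = tElt ^ 2 + tElt - 1 := by
  have := vmk_eq (p := (X 1 : MvPolynomial (Fin 2) ℚ) ^ 3) (q := X 1 ^ 2 + X 1 - 1) 1 0 0 (by ring)
  simpa [tElt, map_pow, map_add, map_sub, map_one] using this

lemma hst : sElt * tElt = sElt + tElt ^ 2 - tElt := by
  have := vmk_eq (p := (X 0 : MvPolynomial (Fin 2) ℚ) * X 1) (q := X 0 + X 1 ^ 2 - X 1)
    0 0 1 (by ring)
  simpa [sElt, tElt, map_mul, map_pow, map_add, map_sub] using this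

lemma hst2 : sElt * tElt ^ 2 = sElt + tElt ^ 2 - 1 := by
  have := vmk_eq (p := (X 0 : MvPolynomial (Fin 2) ℚ) * X 1 ^ 2) (q := X 0 + X 1 ^ 2 - 1)
    1 0 (X 1 + 1) (by ring)
  simpa [sElt, tElt, map_mul, map_pow, map_add, map_sub, map_one] using this

lemma hs2t : sElt ^ 2 * tElt = sElt ^ 2 + tElt - 1 := by
  have := vmk_eq (p := (X 0 : MvPolynomial (Fin 2) ℚ) ^ 2 * X 1) (q := X 0 ^ 2 + X 1 - 1)
    1 0 (X 0 + X 1) (by ring)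
  simpa [sElt, tElt, map_mul, map_pow, map_add, map_sub, map_one] using this

lemma hsd0 : sElt * (1 - sElt ^ 2) = 1 - sElt ^ 2 := by
  have := vmk_eq (p := (X 0 : MvPolynomial (Fin 2) ℚ) * (1 - X 0 ^ 2)) (q := 1 - X 0 ^ 2)
    0 (-1) 0 (by ring)
  simpa [sElt, map_mul, map_pow, map_sub, map_one] using this

lemma htd0 : tElt * (1 - sElt ^ 2) = 1 - sElt ^ 2 := by
  have := vmk_eq (p := (X 1 : MvPolynomial (Fin 2) ℚ) * (1 - X 0 ^ 2)) (q := 1 - X 0 ^ 2)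
    (-1) 0 (-(X 0 + X 1)) (by ring)
  simpa [sElt, tElt, map_mul, map_pow, map_sub, map_one] using this

lemma hsd1 : sElt * (2 * tElt ^ 2 - 1 - sElt ^ 2) = 2 * tElt ^ 2 - 1 - sElt ^ 2 := by
  have := vmk_eq (p := (X 0 : MvPolynomial (Fin 2) ℚ) * (2 * X 1 ^ 2 - 1 - X 0 ^ 2))
    (q := 2 * X 1 ^ 2 - 1 - X 0 ^ 2) 2 (-1) (2 * (X 1 + 1)) (by ring)
  simpa [sElt, tElt, map_mul, map_pow, map_sub, map_one, map_add, map_ofNat] using this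

lemma htd1 : tElt * (2 * tElt ^ 2 - 1 - sElt ^ 2) = 2 * tElt ^ 2 - 1 - sElt ^ 2 := by
  have := vmk_eq (p := (X 1 : MvPolynomial (Fin 2) ℚ) * (2 * X 1 ^ 2 - 1 - X 0 ^ 2))
    (q := 2 * X 1 ^ 2 - 1 - X 0 ^ 2) 1 0 (-(X 0 + X 1)) (by ring)
  simpa [sElt, tElt, map_mul, map_pow, map_sub, map_one, map_add, map_ofNat] using this

lemma hw2 : (1 + sElt - tElt) ^ 2 = 1 + (sElt ^ 2 - tElt ^ 2) := by
  have := vmk_eq (p := ((1 : MvPolynomial (Fin 2) ℚ) + X 0 - X 1) ^ 2)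
    (q := 1 + (X 0 ^ 2 - X 1 ^ 2)) 0 0 (-2) (by ring)
  simpa [sElt, tElt, map_mul, map_pow, map_sub, map_one, map_add] using this

lemma d0_mem : (1 - sElt ^ 2) ∈ transJ2 := Submodule.subset_span (Set.mem_insert _ _)
lemma d1_mem : (2 * tElt ^ 2 - 1 - sElt ^ 2) ∈ transJ2 :=
  Submodule.subset_span (Set.mem_insert_of_mem _ rfl)

lemma s_mul_J : ∀ j ∈ transJ2, sElt * j = j := by
  intro j hj
  induction hj using Submodule.span_induction with
  | mem x h =>
    simp only [Set.mem_insert_iff, Set.mem_singleton_iff] at h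
    rcases h with rfl | rfl
    · exact hsd0
    · exact hsd1
  | zero => rw [mul_zero]
  | add x y hx hy ihx ihy => rw [mul_add, ihx, ihy]
  | smul a x hx ihx => rw [mul_smul_comm a _ x, ihx]

lemma t_mul_J : ∀ j ∈ transJ2, tElt * j = j := by
  intro j hj
  induction hj using Submodule.span_induction with
  | mem x h =>
    simp only [Set.mem_insert_iff, Set.mem_singleton_iff] at h
    rcases h with rfl | rfl
    · exact htd0
    · exact htd1
  | zero => rw [mul_zero]
  | add x y hx hy ihx ihy => rw [mul_add, ihx, ihy]
  | smul a x hx ihx => rw [mul_smul_comm a _ x, ihx]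

lemma J_mul_J : ∀ x ∈ transJ2, ∀ y ∈ transJ2, x * y = 0 := by
  have key : ∀ y ∈ transJ2, sElt ^ 2 * y = y := by
    intro y hy
    rw [sq, mul_assoc, s_mul_J y hy, s_mul_J y hy]
  have key' : ∀ y ∈ transJ2, tElt ^ 2 * y = y := by
    intro y hy
    rw [sq, mul_assoc, t_mul_J y hy, t_mul_J y hy]
  intro x hx
  induction hx using Submodule.span_induction with
  | mem x h =>
    simp only [Set.mem_insert_iff, Set.mem_singleton_iff] at h
    intro y hy
    rcases h with rfl | rfl
    · linear_combination -key y hy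
    · linear_combination 2 * key' y hy - key y hy
  | zero => intro y hy; rw [zero_mul]
  | add x z hx hz ihx ihz => intro y hy; rw [add_mul, ihx y hy, ihz y hy, add_zero]
  | smul a x hx ihx => intro y hy; rw [smul_mul_assoc, ihx y hy, smul_zero]

lemma pow_even {x jb : VirtK2} (hjb : jb ∈ transJ2) (hx2 : x ^ 2 = 1 + jb)
    (hxJ : ∀ j ∈ transJ2, x * j = j) :
    ∀ m : ℕ, x ^ (2 * m) = 1 + (m : VirtK2) * jb := by
  intro m
  induction m with
  | zero => simp
  | succ n ih =>
    have h1 : x ^ (2 * (n + 1)) = x ^ (2 * n) * x ^ 2 := by ring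
    rw [h1, ih, hx2]
    have hjj : jb * jb = 0 := J_mul_J _ hjb _ hjb
    push_cast
    linear_combination (n : VirtK2) * hjj

lemma pow_odd {x jb : VirtK2} (hjb : jb ∈ transJ2) (hx2 : x ^ 2 = 1 + jb)
    (hxJ : ∀ j ∈ transJ2, x * j = j) :
    ∀ m : ℕ, x ^ (2 * m + 1) = x + (m : VirtK2) * jb := by
  intro m
  rw [pow_succ, pow_even hjb hx2 hxJ m]
  linear_combination (m : VirtK2) * hxJ jb hjb

lemma pow_J_mul (x : VirtK2) (hxJ : ∀ j ∈ transJ2, x * j = j) :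
    ∀ n : ℕ, ∀ j ∈ transJ2, x ^ n * j = j := by
  intro n
  induction n with
  | zero => intro j hj; rw [pow_zero, one_mul]
  | succ n ih => intro j hj; rw [pow_succ, mul_assoc, hxJ j hj, ih j hj]

lemma add_J_pow (x : VirtK2) (hxJ : ∀ j ∈ transJ2, x * j = j) (j : VirtK2) (hj : j ∈ transJ2) :
    ∀ ℓ : ℕ, 1 ≤ ℓ → (x + j) ^ ℓ = x ^ ℓ + (ℓ : VirtK2) * j := by
  intro ℓ hℓ
  induction ℓ with
  | zero => omega
  | succ n ih =>
    rcases Nat.eq_or_lt_of_le hℓ with h | h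
    · rw [← h]; push_cast; rw [pow_one, pow_one, one_mul]
    · have hn : 1 ≤ n := by omega
      rw [pow_succ, ih hn]
      have h1 : x ^ n * j = j := pow_J_mul x hxJ n j hj
      have h2 : x * j = j := hxJ j hj
      have h3 : j * j = 0 := J_mul_J j hj j hj
      push_cast
      linear_combination h1 + (n : VirtK2) * h2 + (n : VirtK2) * h3

lemma vanish_aux {A : Type} [CommRing A] [Algebra ℚ A] (f : MvPolynomial (Fin 2) ℚ →ₐ[ℚ] A)
    (h1 : f ((X 1 - 1) * ((X 1) ^ 2 - 1)) = 0)
    (h2 : f ((X 0 - 1) * ((X 0) ^ 2 - 1)) = 0)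
    (h3 : f ((X 0 - X 1) * (X 1 - 1)) = 0) :
    ∀ a ∈ virtIdeal2, f a = 0 := by
  intro a ha
  have hle : virtIdeal2 ≤ RingHom.ker f.toRingHom := by
    rw [virtIdeal2, Ideal.span_le]
    rintro p hp
    simp only [Set.mem_insert_iff, Set.mem_singleton_iff] at hp
    rcases hp with rfl | rfl | rfl
    · exact h1
    · exact h2
    · exact h3
  exact hle ha

noncomputable def e1 : VirtK2 →ₐ[ℚ] ℚ :=
  Ideal.Quotient.liftₐ virtIdeal2 (aeval ![-1, 1])
    (vanish_aux _ (by simp) (by simp) (by simp))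

noncomputable def e2 : VirtK2 →ₐ[ℚ] ℚ :=
  Ideal.Quotient.liftₐ virtIdeal2 (aeval ![-1, -1])
    (vanish_aux _ (by simp) (by simp) (by simp))

noncomputable def e3 : VirtK2 →ₐ[ℚ] ℚ :=
  Ideal.Quotient.liftₐ virtIdeal2 (aeval ![1, 1])
    (vanish_aux _ (by simp) (by simp) (by simp))

lemma eps_sq : (ε : DualNumber ℚ) ^ 2 = 0 := by rw [sq, eps_mul_eps]

noncomputable def D1 : VirtK2 →ₐ[ℚ] DualNumber ℚ :=
  Ideal.Quotient.liftₐ virtIdeal2 (aeval ![1 + ε, 1])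
    (vanish_aux _ (by simp) (by simp; linear_combination (2 + (ε:DualNumber ℚ)) * eps_sq)
      (by simp))

noncomputable def D2 : VirtK2 →ₐ[ℚ] DualNumber ℚ :=
  Ideal.Quotient.liftₐ virtIdeal2 (aeval ![1, 1 + ε])
    (vanish_aux _ (by simp; linear_combination (2 + (ε:DualNumber ℚ)) * eps_sq) (by simp)
      (by simp))

lemma e1_s : e1 sElt = -1 := by simp [e1, sElt, Ideal.Quotient.liftₐ_apply]
lemma e1_t : e1 tElt = 1 := by simp [e1, tElt, Ideal.Quotient.liftₐ_apply]
lemma e2_s : e2 sElt = -1 := by simp [e2, sElt, Ideal.Quotient.liftₐ_apply]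
lemma e2_t : e2 tElt = -1 := by simp [e2, tElt, Ideal.Quotient.liftₐ_apply]
lemma e3_s : e3 sElt = 1 := by simp [e3, sElt, Ideal.Quotient.liftₐ_apply]
lemma e3_t : e3 tElt = 1 := by simp [e3, tElt, Ideal.Quotient.liftₐ_apply]
lemma D1_s : D1 sElt = 1 + ε := by simp [D1, sElt, Ideal.Quotient.liftₐ_apply]; erw [Ideal.Quotient.lift_mk]; simp
lemma D1_t : D1 tElt = 1 := by simp [D1, tElt, Ideal.Quotient.liftₐ_apply]; erw [Ideal.Quotient.lift_mk]; simp
lemma D2_s : D2 sElt = 1 := by simp [D2, sElt, Ideal.Quotient.liftₐ_apply]; erw [Ideal.Quotient.lift_mk]; simp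
lemma D2_t : D2 tElt = 1 + ε := by simp [D2, tElt, Ideal.Quotient.liftₐ_apply]; erw [Ideal.Quotient.lift_mk]; simp

lemma snd_one_add_eps : ((1 + ε : DualNumber ℚ)).snd = 1 := by simp
lemma snd_one_add_eps_sq : (((1 + ε : DualNumber ℚ)) ^ 2).snd = 2 := by
  rw [sq]
  simp [TrivSqZeroExt.snd_mul]
  norm_num

lemma vk_hom_ext {A : Type} [CommRing A] [Algebra ℚ A] {f g : VirtK2 →ₐ[ℚ] A}
    (hs : f sElt = g sElt) (ht : f tElt = g tElt) : f = g := by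
  apply Ideal.Quotient.algHom_ext
  apply MvPolynomial.algHom_ext
  intro i
  fin_cases i
  · simpa [Ideal.Quotient.mkₐ_eq_mk, sElt] using hs
  · simpa [Ideal.Quotient.mkₐ_eq_mk, tElt] using ht

noncomputable abbrev basisSet : Set VirtK2 := {1, sElt, tElt, sElt ^ 2, tElt ^ 2}

lemma one_mem_b : (1 : VirtK2) ∈ Submodule.span ℚ basisSet :=
  Submodule.subset_span (Set.mem_insert _ _)
lemma s_mem_b : sElt ∈ Submodule.span ℚ basisSet :=
  Submodule.subset_span (Set.mem_insert_of_mem _ (Set.mem_insert _ _))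
lemma t_mem_b : tElt ∈ Submodule.span ℚ basisSet :=
  Submodule.subset_span (Set.mem_insert_of_mem _ (Set.mem_insert_of_mem _ (Set.mem_insert _ _)))
lemma s2_mem_b : sElt ^ 2 ∈ Submodule.span ℚ basisSet :=
  Submodule.subset_span (Set.mem_insert_of_mem _ (Set.mem_insert_of_mem _
    (Set.mem_insert_of_mem _ (Set.mem_insert _ _))))
lemma t2_mem_b : tElt ^ 2 ∈ Submodule.span ℚ basisSet :=
  Submodule.subset_span (Set.mem_insert_of_mem _ (Set.mem_insert_of_mem _
    (Set.mem_insert_of_mem _ (Set.mem_insert_of_mem _ rfl))))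

lemma mul_s_mem : ∀ x ∈ Submodule.span ℚ basisSet, x * sElt ∈ Submodule.span ℚ basisSet := by
  intro x hx
  induction hx using Submodule.span_induction with
  | mem y h =>
    simp only [basisSet, Set.mem_insert_iff, Set.mem_singleton_iff] at h
    rcases h with rfl | rfl | rfl | rfl | rfl
    · rw [one_mul]; exact s_mem_b
    · rw [← sq]; exact s2_mem_b
    · rw [mul_comm, hst]; exact sub_mem (add_mem s_mem_b t2_mem_b) t_mem_b
    · rw [← pow_succ, hs3]; exact sub_mem (add_mem s2_mem_b s_mem_b) one_mem_b
    · rw [mul_comm, hst2]; exact sub_mem (add_mem s_mem_b t2_mem_b) one_mem_b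
  | zero => rw [zero_mul]; exact Submodule.zero_mem _
  | add y z hy hz ihy ihz => rw [add_mul]; exact add_mem ihy ihz
  | smul a y hy ihy => rw [smul_mul_assoc]; exact Submodule.smul_mem _ _ ihy

lemma mul_t_mem : ∀ x ∈ Submodule.span ℚ basisSet, x * tElt ∈ Submodule.span ℚ basisSet := by
  intro x hx
  induction hx using Submodule.span_induction with
  | mem y h =>
    simp only [basisSet, Set.mem_insert_iff, Set.mem_singleton_iff] at h
    rcases h with rfl | rfl | rfl | rfl | rfl
    · rw [one_mul]; exact t_mem_b
    · rw [hst]; exact sub_mem (add_mem s_mem_b t2_mem_b) t_mem_b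
    · rw [← sq]; exact t2_mem_b
    · rw [hs2t]; exact sub_mem (add_mem s2_mem_b t_mem_b) one_mem_b
    · rw [← pow_succ, ht3]; exact sub_mem (add_mem t2_mem_b t_mem_b) one_mem_b
  | zero => rw [zero_mul]; exact Submodule.zero_mem _
  | add y z hy hz ihy ihz => rw [add_mul]; exact add_mem ihy ihz
  | smul a y hy ihy => rw [smul_mul_assoc]; exact Submodule.smul_mem _ _ ihy

lemma spanning : Submodule.span ℚ basisSet = ⊤ := by
  rw [Submodule.eq_top_iff']
  intro x
  obtain ⟨p, rfl⟩ := Ideal.Quotient.mk_surjective x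
  induction p using MvPolynomial.induction_on with
  | C a =>
    have h : (Ideal.Quotient.mk virtIdeal2) (C a) = a • (1 : VirtK2) := by
      rw [← MvPolynomial.algebraMap_eq]
      rw [show (Ideal.Quotient.mk virtIdeal2) ((algebraMap ℚ (MvPolynomial (Fin 2) ℚ)) a)
        = algebraMap ℚ VirtK2 a from rfl]
      rw [Algebra.algebraMap_eq_smul_one]
    rw [h]
    exact Submodule.smul_mem _ _ one_mem_b
  | add p q hp hq => rw [map_add]; exact add_mem hp hq
  | mul_X p i hp =>
    rw [map_mul]
    fin_cases i
    · exact mul_s_mem _ hp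
    · exact mul_t_mem _ hp

lemma e1_d0 : e1 (1 - sElt ^ 2) = 0 := by rw [map_sub, map_one, map_pow, e1_s]; norm_num
lemma e2_d0 : e2 (1 - sElt ^ 2) = 0 := by rw [map_sub, map_one, map_pow, e2_s]; norm_num
lemma e3_d0 : e3 (1 - sElt ^ 2) = 0 := by rw [map_sub, map_one, map_pow, e3_s]; norm_num
lemma e1_d1 : e1 (2 * tElt ^ 2 - 1 - sElt ^ 2) = 0 := by
  rw [map_sub, map_sub, map_mul, map_ofNat, map_one, map_pow, map_pow, e1_s, e1_t]; norm_num
lemma e2_d1 : e2 (2 * tElt ^ 2 - 1 - sElt ^ 2) = 0 := by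
  rw [map_sub, map_sub, map_mul, map_ofNat, map_one, map_pow, map_pow, e2_s, e2_t]; norm_num
lemma e3_d1 : e3 (2 * tElt ^ 2 - 1 - sElt ^ 2) = 0 := by
  rw [map_sub, map_sub, map_mul, map_ofNat, map_one, map_pow, map_pow, e3_s, e3_t]; norm_num

lemma hom_J_zero (f : VirtK2 →ₐ[ℚ] ℚ) (h0 : f (1 - sElt ^ 2) = 0)
    (h1 : f (2 * tElt ^ 2 - 1 - sElt ^ 2) = 0) : ∀ j ∈ transJ2, f j = 0 := by
  intro j hj
  induction hj using Submodule.span_induction with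
  | mem y h =>
    simp only [Set.mem_insert_iff, Set.mem_singleton_iff] at h
    rcases h with rfl | rfl
    · exact h0
    · exact h1
  | zero => exact map_zero f
  | add y z hy hz ihy ihz => rw [map_add, ihy, ihz, add_zero]
  | smul a y hy ihy => rw [map_smul, ihy, smul_zero]

lemma e1_J : ∀ j ∈ transJ2, e1 j = 0 := hom_J_zero e1 e1_d0 e1_d1
lemma e2_J : ∀ j ∈ transJ2, e2 j = 0 := hom_J_zero e2 e2_d0 e2_d1
lemma e3_J : ∀ j ∈ transJ2, e3 j = 0 := hom_J_zero e3 e3_d0 e3_d1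

lemma D1_d0 : (D1 (1 - sElt ^ 2)).snd = -2 := by
  rw [map_sub, map_one, map_pow, D1_s, snd_sub, snd_one, snd_one_add_eps_sq]; norm_num
lemma D1_d1 : (D1 (2 * tElt ^ 2 - 1 - sElt ^ 2)).snd = -2 := by
  rw [map_sub, map_sub, map_mul, map_ofNat, map_one, map_pow, map_pow, D1_s, D1_t]
  rw [show (2 : DualNumber ℚ) * (1 : DualNumber ℚ) ^ 2 - 1 - (1 + ε) ^ 2
    = 1 - (1 + ε) ^ 2 from by ring]
  rw [snd_sub, snd_one, snd_one_add_eps_sq]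
  norm_num
lemma D2_d0 : (D2 (1 - sElt ^ 2)).snd = 0 := by
  rw [map_sub, map_one, map_pow, D2_s]; simp
lemma D2_d1 : (D2 (2 * tElt ^ 2 - 1 - sElt ^ 2)).snd = 4 := by
  rw [map_sub, map_sub, map_mul, map_ofNat, map_one, map_pow, map_pow, D2_s, D2_t]
  rw [snd_sub, snd_sub, snd_one]
  rw [show (2 : DualNumber ℚ) * ((1 + ε) ^ 2) = (1 + ε) ^ 2 + (1 + ε) ^ 2 from two_mul _]
  rw [snd_add, snd_one_add_eps_sq]
  norm_num

lemma eq_zero_of {x : VirtK2} (h1 : e1 x = 0) (h2 : e2 x = 0) (h3 : e3 x = 0)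
    (h4 : (D1 x).snd = 0) (h5 : (D2 x).snd = 0) : x = 0 := by
  have hx : x ∈ Submodule.span ℚ basisSet := by rw [spanning]; trivial
  rw [basisSet, Submodule.mem_span_insert] at hx
  obtain ⟨a, y1, hy1, rfl⟩ := hx
  rw [Submodule.mem_span_insert] at hy1
  obtain ⟨b, y2, hy2, rfl⟩ := hy1
  rw [Submodule.mem_span_insert] at hy2
  obtain ⟨c, y3, hy3, rfl⟩ := hy2
  rw [Submodule.mem_span_insert] at hy3
  obtain ⟨d, y4, hy4, rfl⟩ := hy3
  rw [Submodule.mem_span_singleton] at hy4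
  obtain ⟨e, rfl⟩ := hy4
  simp only [map_add, map_smul, map_pow, map_one, e1_s, e1_t, smul_eq_mul] at h1
  simp only [map_add, map_smul, map_pow, map_one, e2_s, e2_t, smul_eq_mul] at h2
  simp only [map_add, map_smul, map_pow, map_one, e3_s, e3_t, smul_eq_mul] at h3
  simp only [map_add, map_smul, map_pow, map_one, D1_s, D1_t, snd_add, snd_smul, snd_one,
    snd_one_add_eps_sq, snd_one_add_eps, one_pow, smul_eq_mul] at h4
  simp only [map_add, map_smul, map_pow, map_one, D2_s, D2_t, snd_add, snd_smul, snd_one,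
    snd_one_add_eps_sq, snd_one_add_eps, one_pow, smul_eq_mul] at h5
  norm_num at h1 h2 h3 h4 h5
  have hb : b = 0 := by linarith
  have hc : c = 0 := by linarith
  have hd : d = 0 := by linarith
  have he : e = 0 := by linarith
  have ha : a = 0 := by linarith
  rw [ha, hb, hc, hd, he]
  simp

lemma mem_J_of {x : VirtK2} (h1 : e1 x = 0) (h2 : e2 x = 0) (h3 : e3 x = 0) : x ∈ transJ2 := by
  set p := (D1 x).snd with hp
  set q := (D2 x).snd with hq
  set j : VirtK2 := (-p/2 - q/4) • (1 - sElt ^ 2) + (q/4) • (2 * tElt ^ 2 - 1 - sElt ^ 2) with hj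
  have hjJ : j ∈ transJ2 := add_mem (Submodule.smul_mem _ _ d0_mem) (Submodule.smul_mem _ _ d1_mem)
  have hxj : x = j := by
    rw [← sub_eq_zero]
    apply eq_zero_of
    · rw [map_sub, h1, hj, map_add, map_smul, map_smul, e1_d0, e1_d1]; simp
    · rw [map_sub, h2, hj, map_add, map_smul, map_smul, e2_d0, e2_d1]; simp
    · rw [map_sub, h3, hj, map_add, map_smul, map_smul, e3_d0, e3_d1]; simp
    · rw [map_sub, snd_sub, hj, map_add, map_smul, map_smul, snd_add, snd_smul, snd_smul,
        D1_d0, D1_d1, ← hp]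
      simp only [smul_eq_mul]
      ring
    · rw [map_sub, snd_sub, hj, map_add, map_smul, map_smul, snd_add, snd_smul, snd_smul,
        D2_d0, D2_d1, ← hq]
      simp only [smul_eq_mul]
      ring
  rw [hxj]
  exact hjJ

lemma s2_sub_one_mem : sElt ^ 2 - 1 ∈ transJ2 := by
  have h := neg_mem d0_mem
  rwa [show -(1 - sElt ^ 2) = sElt ^ 2 - 1 from by ring] at h

lemma t2_sub_one_mem : tElt ^ 2 - 1 ∈ transJ2 := by
  have h2 : (2 : ℚ) • (tElt ^ 2 - 1) = (2 * tElt ^ 2 - 1 - sElt ^ 2) - (1 - sElt ^ 2) := by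
    rw [two_smul]; ring
  exact (Submodule.smul_mem_iff _ two_ne_zero).mp (h2 ▸ sub_mem d1_mem d0_mem)

lemma k_mem : sElt ^ 2 - tElt ^ 2 ∈ transJ2 := by
  have h2 : (2 : ℚ) • (sElt ^ 2 - tElt ^ 2)
      = -((2 * tElt ^ 2 - 1 - sElt ^ 2) + (1 - sElt ^ 2)) := by
    rw [two_smul]; ring
  exact (Submodule.smul_mem_iff _ two_ne_zero).mp (h2 ▸ neg_mem (add_mem d1_mem d0_mem))

lemma w_mul_J : ∀ j ∈ transJ2, (1 + sElt - tElt) * j = j := by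
  intro j hj
  linear_combination s_mul_J j hj - t_mul_J j hj

lemma s_even : ∀ m : ℕ, sElt ^ (2 * m) = 1 + (m : VirtK2) * (sElt ^ 2 - 1) :=
  pow_even s2_sub_one_mem (by ring) s_mul_J

lemma t_even : ∀ m : ℕ, tElt ^ (2 * m) = 1 + (m : VirtK2) * (tElt ^ 2 - 1) :=
  pow_even t2_sub_one_mem (by ring) t_mul_J

lemma w_even : ∀ m : ℕ, (1 + sElt - tElt) ^ (2 * m) = 1 + (m : VirtK2) * (sElt ^ 2 - tElt ^ 2) :=
  pow_even k_mem hw2 w_mul_J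

lemma s_odd : ∀ m : ℕ, sElt ^ (2 * m + 1) = sElt + (m : VirtK2) * (sElt ^ 2 - 1) :=
  pow_odd s2_sub_one_mem (by ring) s_mul_J

lemma t_odd : ∀ m : ℕ, tElt ^ (2 * m + 1) = tElt + (m : VirtK2) * (tElt ^ 2 - 1) :=
  pow_odd t2_sub_one_mem (by ring) t_mul_J

lemma w_odd : ∀ m : ℕ,
    (1 + sElt - tElt) ^ (2 * m + 1) = (1 + sElt - tElt) + (m : VirtK2) * (sElt ^ 2 - tElt ^ 2) :=
  pow_odd k_mem hw2 w_mul_J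

lemma w_pow_eq (ℓ : ℕ) : (1 + sElt - tElt) ^ ℓ = 1 + sElt ^ ℓ - tElt ^ ℓ := by
  rcases Nat.even_or_odd ℓ with ⟨m, rfl⟩ | ⟨m, rfl⟩
  · rw [show m + m = 2 * m from by ring, w_even, s_even, t_even]; ring
  · rw [w_odd, s_odd, t_odd]; ring

lemma psi_J (f : VirtK2 →ₐ[ℚ] VirtK2) (ℓ : ℕ) (hfs : f sElt = sElt ^ ℓ)
    (hft : f tElt = tElt ^ ℓ) : ∀ j ∈ transJ2, f j = (ℓ : VirtK2) * j := by
  intro j hj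
  induction hj using Submodule.span_induction with
  | mem y h =>
    simp only [Set.mem_insert_iff, Set.mem_singleton_iff] at h
    rcases h with rfl | rfl
    · rw [map_sub, map_one, map_pow, hfs, ← pow_mul, show ℓ * 2 = 2 * ℓ from mul_comm ℓ 2,
        s_even]
      ring
    · rw [map_sub, map_sub, map_mul, map_ofNat, map_one, map_pow, map_pow, hfs, hft,
        ← pow_mul, ← pow_mul, show ℓ * 2 = 2 * ℓ from mul_comm ℓ 2, s_even, t_even]
      ring
  | zero => rw [map_zero, mul_zero]
  | add y z hy hz ihy ihz => rw [map_add, ihy, ihz, mul_add]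
  | smul a y hy ihy =>
    rw [map_smul, ihy]
    exact (mul_smul_comm a _ y).symm

lemma unit_add_J {x jb : VirtK2} (hjb : jb ∈ transJ2) (hx2 : x ^ 2 = 1 + jb)
    (hxJ : ∀ j ∈ transJ2, x * j = j) {j : VirtK2} (hj : j ∈ transJ2) : IsUnit (x + j) := by
  apply IsUnit.of_mul_eq_one (x - jb - j)
  have hxb := hxJ jb hjb
  have hjjb := J_mul_J j hj jb hjb
  have hjj := J_mul_J j hj j hj
  linear_combination hx2 - hxb - hjjb - hjj

theorem virtual_Ktheory_P12_line_elements
    (ψ : ℕ → (VirtK2 →ₐ[ℚ] VirtK2))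
    (hψ : ∀ ℓ : ℕ, 1 ≤ ℓ → ψ ℓ sElt = sElt ^ ℓ ∧ ψ ℓ tElt = tElt ^ ℓ) :
    ({L : VirtK2 | IsUnit L ∧ ∀ ℓ : ℕ, 1 ≤ ℓ → ψ ℓ L = L ^ ℓ}
      = {x | ∃ j ∈ transJ2, x = 1 + j} ∪ {x | ∃ j ∈ transJ2, x = sElt + j}
        ∪ {x | ∃ j ∈ transJ2, x = tElt + j}
        ∪ {x | ∃ j ∈ transJ2, x = 1 + sElt - tElt + j}) ∧
    -- the four cosets are pairwise disjoint
    (∀ j ∈ transJ2, ∀ j' ∈ transJ2, (1 : VirtK2) + j ≠ sElt + j') ∧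
    (∀ j ∈ transJ2, ∀ j' ∈ transJ2, (1 : VirtK2) + j ≠ tElt + j') ∧
    (∀ j ∈ transJ2, ∀ j' ∈ transJ2, (1 : VirtK2) + j ≠ 1 + sElt - tElt + j') ∧
    (∀ j ∈ transJ2, ∀ j' ∈ transJ2, sElt + j ≠ tElt + j') ∧
    (∀ j ∈ transJ2, ∀ j' ∈ transJ2, sElt + j ≠ 1 + sElt - tElt + j') ∧
    (∀ j ∈ transJ2, ∀ j' ∈ transJ2, tElt + j ≠ 1 + sElt - tElt + j') := by
  constructor
  · ext L
    simp only [Set.mem_setOf_eq, Set.mem_union]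
    constructor
    · rintro ⟨hu, h⟩
      have h2 := h 2 (by norm_num)
      have hs2 := (hψ 2 (by norm_num)).1
      have ht2 := (hψ 2 (by norm_num)).2
      have ce1 : e1.comp (ψ 2) = e3 := by
        apply vk_hom_ext
        · rw [AlgHom.comp_apply, hs2, map_pow, e1_s, e3_s]; norm_num
        · rw [AlgHom.comp_apply, ht2, map_pow, e1_t, e3_t]; norm_num
      have ce2 : e2.comp (ψ 2) = e3 := by
        apply vk_hom_ext
        · rw [AlgHom.comp_apply, hs2, map_pow, e2_s, e3_s]; norm_num
        · rw [AlgHom.comp_apply, ht2, map_pow, e2_t, e3_t]; norm_num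
      have ce3 : e3.comp (ψ 2) = e3 := by
        apply vk_hom_ext
        · rw [AlgHom.comp_apply, hs2, map_pow, e3_s]; norm_num
        · rw [AlgHom.comp_apply, ht2, map_pow, e3_t]; norm_num
      have k1 : e3 L = (e1 L) ^ 2 := by
        have hc := DFunLike.congr_fun ce1 L
        rw [AlgHom.comp_apply] at hc
        rw [← hc, h2, map_pow]
      have k2 : e3 L = (e2 L) ^ 2 := by
        have hc := DFunLike.congr_fun ce2 L
        rw [AlgHom.comp_apply] at hc
        rw [← hc, h2, map_pow]
      have k3 : e3 L = (e3 L) ^ 2 := by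
        have hc := DFunLike.congr_fun ce3 L
        rw [AlgHom.comp_apply, h2, map_pow] at hc
        exact hc.symm
      have hne : e3 L ≠ 0 := (hu.map e3).ne_zero
      have hx3 : e3 L = 1 := by
        have hz : e3 L * (e3 L - 1) = 0 := by linear_combination -k3
        rcases mul_eq_zero.mp hz with hz' | hz'
        · exact absurd hz' hne
        · exact sub_eq_zero.mp hz'
      have hx1 : e1 L = 1 ∨ e1 L = -1 := by
        have hsq : (e1 L) ^ 2 = 1 := by rw [← k1, hx3]
        have hz : (e1 L - 1) * (e1 L + 1) = 0 := by linear_combination hsq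
        rcases mul_eq_zero.mp hz with hz' | hz'
        · exact Or.inl (sub_eq_zero.mp hz')
        · exact Or.inr (eq_neg_of_add_eq_zero_left hz')
      have hx2v : e2 L = 1 ∨ e2 L = -1 := by
        have hsq : (e2 L) ^ 2 = 1 := by rw [← k2, hx3]
        have hz : (e2 L - 1) * (e2 L + 1) = 0 := by linear_combination hsq
        rcases mul_eq_zero.mp hz with hz' | hz'
        · exact Or.inl (sub_eq_zero.mp hz')
        · exact Or.inr (eq_neg_of_add_eq_zero_left hz')
      rcases hx1 with h1v | h1v <;> rcases hx2v with h2v | h2v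
      · refine Or.inl (Or.inl (Or.inl ⟨L - 1, mem_J_of ?_ ?_ ?_, by ring⟩))
        · rw [map_sub, map_one, h1v]; ring
        · rw [map_sub, map_one, h2v]; ring
        · rw [map_sub, map_one, hx3]; ring
      · refine Or.inl (Or.inr ⟨L - tElt, mem_J_of ?_ ?_ ?_, by ring⟩)
        · rw [map_sub, e1_t, h1v]; ring
        · rw [map_sub, e2_t, h2v]; ring
        · rw [map_sub, e3_t, hx3]; ring
      · refine Or.inr ⟨L - (1 + sElt - tElt), mem_J_of ?_ ?_ ?_, by ring⟩
        · rw [map_sub, map_sub, map_add, map_one, e1_s, e1_t, h1v]; ring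
        · rw [map_sub, map_sub, map_add, map_one, e2_s, e2_t, h2v]; ring
        · rw [map_sub, map_sub, map_add, map_one, e3_s, e3_t, hx3]; ring
      · refine Or.inl (Or.inl (Or.inr ⟨L - sElt, mem_J_of ?_ ?_ ?_, by ring⟩))
        · rw [map_sub, e1_s, h1v]; ring
        · rw [map_sub, e2_s, h2v]; ring
        · rw [map_sub, e3_s, hx3]; ring
    · have one_mul_J : ∀ j ∈ transJ2, (1 : VirtK2) * j = j := fun j _ => one_mul j
      rintro (((⟨j, hj, rfl⟩ | ⟨j, hj, rfl⟩) | ⟨j, hj, rfl⟩) | ⟨j, hj, rfl⟩)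
      · refine ⟨unit_add_J (transJ2.zero_mem) (by ring) one_mul_J hj, ?_⟩
        intro ℓ hℓ
        rw [map_add, psi_J (ψ ℓ) ℓ (hψ ℓ hℓ).1 (hψ ℓ hℓ).2 j hj, map_one,
          add_J_pow 1 one_mul_J j hj ℓ hℓ, one_pow]
      · refine ⟨unit_add_J s2_sub_one_mem (by ring) s_mul_J hj, ?_⟩
        intro ℓ hℓ
        rw [map_add, psi_J (ψ ℓ) ℓ (hψ ℓ hℓ).1 (hψ ℓ hℓ).2 j hj, (hψ ℓ hℓ).1,
          add_J_pow sElt s_mul_J j hj ℓ hℓ]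
      · refine ⟨unit_add_J t2_sub_one_mem (by ring) t_mul_J hj, ?_⟩
        intro ℓ hℓ
        rw [map_add, psi_J (ψ ℓ) ℓ (hψ ℓ hℓ).1 (hψ ℓ hℓ).2 j hj, (hψ ℓ hℓ).2,
          add_J_pow tElt t_mul_J j hj ℓ hℓ]
      · refine ⟨unit_add_J k_mem hw2 w_mul_J hj, ?_⟩
        intro ℓ hℓ
        rw [map_add, psi_J (ψ ℓ) ℓ (hψ ℓ hℓ).1 (hψ ℓ hℓ).2 j hj, map_sub, map_add, map_one,
          (hψ ℓ hℓ).1, (hψ ℓ hℓ).2, add_J_pow (1 + sElt - tElt) w_mul_J j hj ℓ hℓ,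
          w_pow_eq ℓ]
  · refine ⟨?_, ?_, ?_, ?_, ?_, ?_⟩
    · intro j hj j' hj' heq
      have := congrArg e1 heq
      rw [map_add, map_add, map_one, e1_s, e1_J j hj, e1_J j' hj'] at this
      norm_num at this
    · intro j hj j' hj' heq
      have := congrArg e2 heq
      rw [map_add, map_add, map_one, e2_t, e2_J j hj, e2_J j' hj'] at this
      norm_num at this
    · intro j hj j' hj' heq
      have := congrArg e1 heq
      rw [map_add, map_add, map_sub, map_add, map_one, e1_s, e1_t, e1_J j hj,
        e1_J j' hj'] at this
      norm_num at this
    · intro j hj j' hj' heq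
      have := congrArg e1 heq
      rw [map_add, map_add, e1_s, e1_t, e1_J j hj, e1_J j' hj'] at this
      norm_num at this
    · intro j hj j' hj' heq
      have := congrArg e2 heq
      rw [map_add, map_add, map_sub, map_add, map_one, e2_s, e2_t, e2_J j hj,
        e2_J j' hj'] at this
      norm_num at this
    · intro j hj j' hj' heq
      have := congrArg e1 heq
      rw [map_add, map_add, map_sub, map_add, map_one, e1_s, e1_t, e1_J j hj,
        e1_J j' hj'] at this
      norm_num at this
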